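/- arXiv:1310.6006 — 6 statements merged into one kernel-verified Lean document; each statement's English description precedes it below -/
import Mathlib

section
/- Let f1, f2, f3 be linear forms on ℂ², f_i(z1,z2) = a_i·z1 + b_i·z2 with complex coefficients, which are pairwise linearly independent (a_i·b_j − a_j·b_i ≠ 0 for all i ≠ j in {1,2,3}). Then both monomials z1² and z2² belong to the ideal of the polynomial ring ℂ[z1,z2] generated by the two polynomials f1·f2 and f3. -/
open MvPolynomial

lemma helper_mem {c : ℂ} (hc : c ≠ 0) {p U V g f : MvPolynomial (Fin 2) ℂ}
    (key : C c * p = U * g + V * f) : p ∈ Ideal.span ({g, f} : Set (MvPolynomial (Fin 2) ℂ)) := by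
  rw [Ideal.mem_span_pair]
  refine ⟨C c⁻¹ * U, C c⁻¹ * V, ?_⟩
  have h1 : (C c⁻¹ : MvPolynomial (Fin 2) ℂ) * C c = 1 := by
    rw [← map_mul, inv_mul_cancel₀ hc, map_one]
  calc C c⁻¹ * U * g + C c⁻¹ * V * f = C c⁻¹ * (U * g + V * f) := by ring
    _ = C c⁻¹ * (C c * p) := by rw [key]
    _ = p := by rw [← mul_assoc, h1, one_mul]

theorem sq_mem_span (a b : Fin 3 → ℂ)
    (h : ∀ i j : Fin 3, i ≠ j → a i * b j - a j * b i ≠ 0) :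
    (X 0 ^ 2 : MvPolynomial (Fin 2) ℂ) ∈
        Ideal.span ({(C (a 0) * X 0 + C (b 0) * X 1) * (C (a 1) * X 0 + C (b 1) * X 1),
          C (a 2) * X 0 + C (b 2) * X 1} : Set (MvPolynomial (Fin 2) ℂ)) ∧
      (X 1 ^ 2 : MvPolynomial (Fin 2) ℂ) ∈
        Ideal.span ({(C (a 0) * X 0 + C (b 0) * X 1) * (C (a 1) * X 0 + C (b 1) * X 1),
          C (a 2) * X 0 + C (b 2) * X 1} : Set (MvPolynomial (Fin 2) ℂ)) := by
  have h02 : a 0 * b 2 - a 2 * b 0 ≠ 0 := h 0 2 (by decide)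
  have h12 : a 1 * b 2 - a 2 * b 1 ≠ 0 := h 1 2 (by decide)
  set f3 : MvPolynomial (Fin 2) ℂ := C (a 2) * X 0 + C (b 2) * X 1 with hf3
  by_cases hb2 : b 2 = 0
  · -- then a 2 ≠ 0, b 0 ≠ 0, b 1 ≠ 0
    have ha2 : a 2 ≠ 0 := by
      intro ha; apply h02; rw [ha, hb2]; ring
    have hb0 : b 0 ≠ 0 := by
      intro hb; apply h02; rw [hb, hb2]; ring
    have hb1 : b 1 ≠ 0 := by
      intro hb; apply h12; rw [hb, hb2]; ring
    constructor
    · refine helper_mem (mul_ne_zero ha2 ha2) (U := 0) (V := C (a 2) * X 0) ?_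
      simp only [hf3, hb2, map_mul, map_zero]
      ring
    · refine helper_mem (c := a 2 * a 2 * (b 0 * b 1))
        (mul_ne_zero (mul_ne_zero ha2 ha2) (mul_ne_zero hb0 hb1))
        (U := C (a 2) * C (a 2))
        (V := -(C (a 0) * C (a 1) * f3 +
          (C (a 0) * C (a 2) * C (b 1) + C (a 1) * C (a 2) * C (b 0)) * X 1)) ?_
      simp only [hf3, hb2, map_mul, map_zero]
      ring
  · have hb2' : (b 2 : ℂ) ≠ 0 := hb2
    have hc1 : (a 0 * b 2 - a 2 * b 0) * (a 1 * b 2 - a 2 * b 1) ≠ 0 := mul_ne_zero h02 h12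
    constructor
    · refine helper_mem hc1
        (U := C (b 2) * C (b 2))
        (V := -((C (b 0) * (C (a 1) * C (b 2) - C (a 2) * C (b 1)) +
          C (b 1) * (C (a 0) * C (b 2) - C (a 2) * C (b 0))) * X 0 + C (b 0) * C (b 1) * f3)) ?_
      simp only [hf3, map_mul, map_sub]
      ring
    · refine helper_mem (c := (a 0 * b 2 - a 2 * b 0) * (a 1 * b 2 - a 2 * b 1) * (b 2 * b 2))
        (mul_ne_zero hc1 (mul_ne_zero hb2' hb2'))
        (U := C (a 2) * C (a 2) * C (b 2) * C (b 2))
        (V := (C (a 0) * C (b 2) - C (a 2) * C (b 0)) * (C (a 1) * C (b 2) - C (a 2) * C (b 1)) *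
            (f3 - 2 * C (a 2) * X 0) -
          C (a 2) * C (a 2) * ((C (b 0) * (C (a 1) * C (b 2) - C (a 2) * C (b 1)) +
            C (b 1) * (C (a 0) * C (b 2) - C (a 2) * C (b 0))) * X 0 + C (b 0) * C (b 1) * f3)) ?_
      simp only [hf3, map_mul, map_sub]
      ring
end

section
/- Let χ be a complex number with χ ≠ 0 and χ ≠ −1, let z1 be a nonzero complex number, and let z2 be any complex number. Then the assignment α3 = (1+1/χ)·(1+z1), α4 = 0, β3 = 0, β4 = −1 − 1/((1+χ)·z1), γ1 = (1/χ)·(1+z2)·(1+(1+χ)·z1), γ2 = (1/χ)·(1+1/z1)·z2, γ3 = −((1+χ)/χ + 1/(χ·z1))·z2, γ4 = −(1/χ)·(1+z1)·(1+z2) satisfies all six equations of the deca-cut parameter system. -/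
set_option maxHeartbeats 4000000

/-- The six deca-cut equations for the massless four-point planar triple box,
after imposing `α1 = α2 = β1 = β2 = 0`. -/
def DecaCut (χ α3 α4 β3 β4 γ1 γ2 γ3 γ4 : ℂ) : Prop :=
  α3 * α4 = 0 ∧
  β3 * β4 = 0 ∧
  γ1 * γ2 - γ3 * γ4 = 0 ∧
  1 + γ1 - γ2 - γ3 + (1 + χ) * γ4 + χ * (γ1 * γ2 - γ3 * γ4) = 0 ∧
  -α3 * (α4 + χ * (γ2 + γ3 / (1 + χ))) + χ * (γ2 * (1 + γ1) - γ3 * γ4) +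
      (1 + χ) * α4 * (γ2 - γ4) = 0 ∧
  -(γ4 + β3 / (1 + χ)) * ((1 + χ) * β4 + χ * γ3) -
      γ1 * (β4 + (1 - γ2 - β3 + β4) * χ) = 0

private lemma eq3 (χ z1 z2 : ℂ) (hχ : χ ≠ 0) (hz1 : z1 ≠ 0) (h1 : (1:ℂ) + χ ≠ 0) :
    1 / χ * (1 + z2) * (1 + (1 + χ) * z1) * (1 / χ * (1 + 1 / z1) * z2) -
      -((1 + χ) / χ + 1 / (χ * z1)) * z2 * (-(1 / χ) * (1 + z1) * (1 + z2)) = 0 := by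
  rw [sub_eq_zero]
  field_simp
  ring

private lemma eq4 (χ z1 z2 : ℂ) (hχ : χ ≠ 0) (hz1 : z1 ≠ 0) (h1 : (1:ℂ) + χ ≠ 0) :
    1 + 1 / χ * (1 + z2) * (1 + (1 + χ) * z1) - 1 / χ * (1 + 1 / z1) * z2 -
        -((1 + χ) / χ + 1 / (χ * z1)) * z2 +
        (1 + χ) * (-(1 / χ) * (1 + z1) * (1 + z2)) +
      χ *
        (1 / χ * (1 + z2) * (1 + (1 + χ) * z1) * (1 / χ * (1 + 1 / z1) * z2) -
          -((1 + χ) / χ + 1 / (χ * z1)) * z2 * (-(1 / χ) * (1 + z1) * (1 + z2))) = 0 := by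
  field_simp
  ring

private lemma eq5 (χ z1 z2 : ℂ) (hχ : χ ≠ 0) (hz1 : z1 ≠ 0) (h1 : (1:ℂ) + χ ≠ 0) :
    -((1 + 1 / χ) * (1 + z1)) *
        (0 + χ * (1 / χ * (1 + 1 / z1) * z2 + -((1 + χ) / χ + 1 / (χ * z1)) * z2 / (1 + χ))) +
        χ *
          (1 / χ * (1 + 1 / z1) * z2 * (1 + 1 / χ * (1 + z2) * (1 + (1 + χ) * z1)) -
            -((1 + χ) / χ + 1 / (χ * z1)) * z2 * (-(1 / χ) * (1 + z1) * (1 + z2))) +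
      (1 + χ) * 0 * (1 / χ * (1 + 1 / z1) * z2 - -(1 / χ) * (1 + z1) * (1 + z2)) = 0 := by
  have hC : χ ^ 4 * z1 ^ 2 + χ ^ 5 * z1 ^ 2 ≠ 0 := by
    have h : χ ^ 4 * z1 ^ 2 + χ ^ 5 * z1 ^ 2 = χ ^ 4 * z1 ^ 2 * (1 + χ) := by ring
    rw [h]; exact mul_ne_zero (mul_ne_zero (pow_ne_zero 4 hχ) (pow_ne_zero 2 hz1)) h1
  field_simp
  ring

private lemma eq6 (χ z1 z2 : ℂ) (hχ : χ ≠ 0) (hz1 : z1 ≠ 0) (h1 : (1:ℂ) + χ ≠ 0) :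
    -(-(1 / χ) * (1 + z1) * (1 + z2) + 0 / (1 + χ)) *
        ((1 + χ) * (-1 - 1 / ((1 + χ) * z1)) + χ * (-((1 + χ) / χ + 1 / (χ * z1)) * z2)) -
      1 / χ * (1 + z2) * (1 + (1 + χ) * z1) *
        (-1 - 1 / ((1 + χ) * z1) + (1 - 1 / χ * (1 + 1 / z1) * z2 - 0 + (-1 - 1 / ((1 + χ) * z1))) * χ) =
    0 := by
  have hA : z1 ^ 2 * χ ^ 3 + z1 ^ 2 * χ ^ 4 ≠ 0 := by
    have h : z1 ^ 2 * χ ^ 3 + z1 ^ 2 * χ ^ 4 = z1 ^ 2 * χ ^ 3 * (1 + χ) := by ring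
    rw [h]; exact mul_ne_zero (mul_ne_zero (pow_ne_zero 2 hz1) (pow_ne_zero 3 hχ)) h1
  have hB : z1 ^ 3 * χ ^ 2 + z1 ^ 3 * χ ^ 3 * 2 + z1 ^ 3 * χ ^ 4 ≠ 0 := by
    have h : z1 ^ 3 * χ ^ 2 + z1 ^ 3 * χ ^ 3 * 2 + z1 ^ 3 * χ ^ 4
        = z1 ^ 3 * χ ^ 2 * ((1 + χ) * (1 + χ)) := by ring
    rw [h]
    exact mul_ne_zero (mul_ne_zero (pow_ne_zero 3 hz1) (pow_ne_zero 2 hχ)) (mul_ne_zero h1 h1)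
  field_simp
  ring

theorem branch_S2 (χ z1 z2 : ℂ) (hχ : χ ≠ 0) (hχ' : χ ≠ -1) (hz1 : z1 ≠ 0) :
    DecaCut χ
      ((1 + 1 / χ) * (1 + z1)) 0
      0 (-1 - 1 / ((1 + χ) * z1))
      ((1 / χ) * (1 + z2) * (1 + (1 + χ) * z1))
      ((1 / χ) * (1 + 1 / z1) * z2)
      (-((1 + χ) / χ + 1 / (χ * z1)) * z2)
      (-(1 / χ) * (1 + z1) * (1 + z2)) := by
  have h1 : (1 : ℂ) + χ ≠ 0 := by
    intro h; apply hχ'; linear_combination h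
  exact ⟨by ring, by ring, eq3 χ z1 z2 hχ hz1 h1, eq4 χ z1 z2 hχ hz1 h1,
    eq5 χ z1 z2 hχ hz1 h1, eq6 χ z1 z2 hχ hz1 h1⟩
end

section
/- Let χ be a complex number with χ ≠ 0 and χ ≠ −1, let z1 be a nonzero complex number, and let z2 be any complex number. Then the assignment α3 = z2, α4 = 0, β3 = 0, β4 = −1−z1, γ1 = (1/χ)·(1+1/z1), γ2 = 0, γ3 = 0, γ4 = −(1/χ)·(1 + (1/(1+χ))·(1/z1)) satisfies all six equations of the deca-cut parameter system. -/
theorem branch_S3 (χ z1 z2 : ℂ) (hχ : χ ≠ 0) (hχ' : χ ≠ -1) (hz1 : z1 ≠ 0) :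
    DecaCut χ
      z2 0
      0 (-1 - z1)
      ((1 / χ) * (1 + 1 / z1))
      0
      0
      (-(1 / χ) * (1 + (1 / (1 + χ)) * (1 / z1))) := by
  have h1 : (1 : ℂ) + χ ≠ 0 := by
    intro h; apply hχ'; linear_combination h
  refine ⟨by ring, by ring, by ring, ?_, by field_simp; ring, ?_⟩ <;>
    field_simp <;> ring
end

section
/- Let χ be a complex number with χ ≠ 0 and χ ≠ −1, let z1 be a nonzero complex number, and let z2 be any complex number. Then the assignment α3 = (1+1/χ)·(1+z1), α4 = 0, β3 = 0, β4 = z2, γ1 = 0, γ2 = −(1/χ)·(1+1/z1), γ3 = 1/(χ·z1) + (1+χ)/χ, γ4 = 0 satisfies all six equations of the deca-cut parameter system. -/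
theorem branch_S4 (χ z1 z2 : ℂ) (hχ : χ ≠ 0) (hχ' : χ ≠ -1) (hz1 : z1 ≠ 0) :
    DecaCut χ
      ((1 + 1 / χ) * (1 + z1)) 0
      0 z2
      0
      (-(1 / χ) * (1 + 1 / z1))
      (1 / (χ * z1) + (1 + χ) / χ)
      0 := by
  have h1 : (1 : ℂ) + χ ≠ 0 := by
    intro h; apply hχ'; linear_combination h
  refine ⟨by ring, by ring, by ring, ?_, ?_, ?_⟩ <;>
    field_simp <;> ring_nf <;>
    rw [show χ ^ 4 * z1 ^ 2 + χ ^ 5 * z1 ^ 2 = χ ^ 4 * z1 ^ 2 * (1 + χ) by ring,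
      mul_inv, mul_inv] <;>
    field_simp <;> ring
end

section
/- Let χ be a complex number with χ ≠ 0 and χ ≠ −1, and let z1, z2 be any complex numbers. Then the assignment α3 = z2, α4 = 0, β3 = 1, β4 = 0, γ1 = z1, γ2 = 0, γ3 = 0, γ4 = −(1+z1)/(1+χ) satisfies all six equations of the deca-cut parameter system. -/
theorem branch_S5 (χ z1 z2 : ℂ) (hχ : χ ≠ 0) (hχ' : χ ≠ -1) :
    DecaCut χ
      z2 0
      1 0
      z1 0 0 (-(1 + z1) / (1 + χ)) := by
  have h : (1 + χ) ≠ 0 := by intro h; apply hχ'; linear_combination h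
  refine ⟨by ring, by ring, by ring, ?_, by ring, by ring⟩
  field_simp
  ring
end

section
/- Let χ be a complex number with χ ≠ 0 and χ ≠ −1, and let z1, z2 be any complex numbers. Then the assignment α3 = 1, α4 = 0, β3 = z2, β4 = 0, γ1 = 0, γ2 = z1, γ3 = 0, γ4 = −(1−z1)/(1+χ) satisfies all six equations of the deca-cut parameter system. -/
theorem branch_S6 (χ z1 z2 : ℂ) (hχ : χ ≠ 0) (hχ' : χ ≠ -1) :
    DecaCut χ
      1 0
      z2 0
      0 z1 0 (-(1 - z1) / (1 + χ)) := by
  have h : (1:ℂ) + χ ≠ 0 := by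
    intro h; apply hχ'; linear_combination h
  refine ⟨by ring, by ring, by ring, ?_, ?_, ?_⟩ <;> field_simp <;> ring
end
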